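/- The set of positive integers of the form 4^a(8b+7), with a, b nonnegative integers, has natural density 1/6. -/

import Mathlib

open Filter

open Finset in
lemma inj47 : ∀ a c b d : ℕ, 4^a * (8*b+7) = 4^c * (8*d+7) → a = c ∧ b = d := by
  intro a
  induction a with
  | zero =>
    intro c b d h
    cases c with
    | zero => simp at h; omega
    | succ c =>
      exfalso
      rw [pow_succ, mul_comm (4^c) 4, mul_assoc] at h
      set X := 4^c * (8*d+7)
      simp at h
      omega
  | succ a ih =>
    intro c b d h
    cases c with
    | zero =>
      exfalso
      rw [pow_succ, mul_comm (4^a) 4, mul_assoc] at h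
      set X := 4^a * (8*b+7)
      simp at h
      omega
    | succ c =>
      rw [pow_succ, pow_succ, mul_comm (4^a) 4, mul_comm (4^c) 4, mul_assoc, mul_assoc] at h
      have h' := Nat.eq_of_mul_eq_mul_left (by norm_num : 0 < 4) h
      obtain ⟨h1, h2⟩ := ih c b d h'
      exact ⟨by omega, h2⟩

lemma count_eq (N : ℕ) :
    Nat.card {n : ℕ // n ∈ {n : ℕ | ∃ a b : ℕ, n = 4 ^ a * (8 * b + 7)} ∧ 1 ≤ n ∧ n ≤ N} =
    ∑ a ∈ Finset.range (Nat.log 4 N + 1), (N / 4 ^ a + 1) / 8 := by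
  classical
  set G : Finset ℕ := (Finset.Icc 1 N).filter (fun n => ∃ a b : ℕ, n = 4 ^ a * (8 * b + 7)) with hG
  have hset : {n : ℕ | n ∈ {n : ℕ | ∃ a b : ℕ, n = 4 ^ a * (8 * b + 7)} ∧ 1 ≤ n ∧ n ≤ N} = ↑G := by
    ext n
    simp [hG, Finset.mem_filter, Finset.mem_Icc, Set.mem_setOf_eq]
    tauto
  have hcard : Nat.card {n : ℕ // n ∈ {n : ℕ | ∃ a b : ℕ, n = 4 ^ a * (8 * b + 7)} ∧ 1 ≤ n ∧ n ≤ N} = G.card := by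
    rw [show {n : ℕ // n ∈ {n : ℕ | ∃ a b : ℕ, n = 4 ^ a * (8 * b + 7)} ∧ 1 ≤ n ∧ n ≤ N} = ↥{n : ℕ | n ∈ {n : ℕ | ∃ a b : ℕ, n = 4 ^ a * (8 * b + 7)} ∧ 1 ≤ n ∧ n ≤ N} from rfl,
      Nat.card_coe_set_eq, hset, Set.ncard_coe_finset]
  rw [hcard]
  have hsum : ∑ a ∈ Finset.range (Nat.log 4 N + 1), (N / 4 ^ a + 1) / 8
      = ((Finset.range (Nat.log 4 N + 1)).sigma (fun a => Finset.range ((N / 4 ^ a + 1) / 8))).card := by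
    rw [Finset.card_sigma]; simp
  rw [hsum]
  refine (Finset.card_bij (fun p _ => 4 ^ p.1 * (8 * p.2 + 7)) ?_ ?_ ?_).symm
  · -- maps into G
    rintro ⟨a, b⟩ hp
    simp only [Finset.mem_sigma, Finset.mem_range] at hp
    obtain ⟨ha, hb⟩ := hp
    have h4 : 0 < (4:ℕ) ^ a := Nat.pow_pos (by norm_num)
    have hble : 8 * b + 7 ≤ N / 4 ^ a := by
      have : b + 1 ≤ (N / 4 ^ a + 1) / 8 := hb
      have := (Nat.le_div_iff_mul_le (by norm_num : 0 < 8)).mp this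
      omega
    have hle : 4 ^ a * (8 * b + 7) ≤ N := by
      have := (Nat.le_div_iff_mul_le h4).mp hble
      nlinarith [this]
    simp only [hG, Finset.mem_filter, Finset.mem_Icc]
    exact ⟨⟨Nat.one_le_iff_ne_zero.mpr (by positivity), hle⟩, a, b, rfl⟩
  · -- injective
    rintro ⟨a, b⟩ _ ⟨c, d⟩ _ h
    obtain ⟨h1, h2⟩ := inj47 a c b d h
    simp [h1, h2]
  · -- surjective
    intro n hn
    simp only [hG, Finset.mem_filter, Finset.mem_Icc] at hn
    obtain ⟨⟨hn1, hnN⟩, a, b, rfl⟩ := hn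
    have h4 : 0 < (4:ℕ) ^ a := Nat.pow_pos (by norm_num)
    have hNpos : N ≠ 0 := by omega
    have ha : a ≤ Nat.log 4 N := by
      rw [Nat.le_log_iff_pow_le (by norm_num) hNpos]
      calc (4:ℕ)^a ≤ 4^a * (8*b+7) := Nat.le_mul_of_pos_right _ (by omega)
        _ ≤ N := hnN
    have hble : 8 * b + 7 ≤ N / 4 ^ a := by
      rw [Nat.le_div_iff_mul_le h4]
      nlinarith [hnN]
    have hb : b < (N / 4 ^ a + 1) / 8 := by
      have : b + 1 ≤ (N / 4 ^ a + 1) / 8 := by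
        rw [Nat.le_div_iff_mul_le (by norm_num : 0 < 8)]
        omega
      omega
    exact ⟨⟨a, b⟩, by simp [Finset.mem_sigma, Finset.mem_range, Nat.lt_succ_iff, ha, hb], rfl⟩

lemma cast_div_lb (k m : ℕ) (hm : 0 < m) : (k:ℝ)/m - 1 ≤ ((k/m : ℕ) : ℝ) := by
  have h1 := Nat.div_add_mod k m
  have h2 : k % m < m := Nat.mod_lt _ hm
  have hm' : (0:ℝ) < m := by exact_mod_cast hm
  have he : (k:ℝ) = m * ((k/m:ℕ):ℝ) + ((k%m:ℕ):ℝ) := by exact_mod_cast h1.symm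
  have h2' : ((k%m:ℕ):ℝ) < m := by exact_mod_cast h2
  have h3 : (k:ℝ)/m ≤ ((k/m:ℕ):ℝ) + 1 := by rw [div_le_iff₀ hm']; nlinarith
  linarith

lemma sq_le_pow4 : ∀ L : ℕ, (L+1)^2 ≤ 4^L := by
  intro L
  induction L with
  | zero => norm_num
  | succ L ih =>
    calc (L+1+1)^2 ≤ 4*(L+1)^2 := by nlinarith [sq_nonneg L, Nat.zero_le L]
      _ ≤ 4*4^L := by omega
      _ = 4^(L+1) := (pow_succ' 4 L).symm

lemma count_bounds (N : ℕ) (hN : 1 ≤ N) :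
    |(∑ a ∈ Finset.range (Nat.log 4 N + 1), ((N / 4 ^ a + 1) / 8 : ℕ) : ℝ) - N/6|
      ≤ 2 * (Nat.log 4 N + 1) := by
  set L := Nat.log 4 N with hL
  have hNpos : (0:ℝ) < N := by exact_mod_cast hN
  -- real geometric sum
  have hgeom : ∑ a ∈ Finset.range (L+1), (N:ℝ)/(8 * 4^a) = N/6 * (1 - (1/4:ℝ)^(L+1)) := by
    have h1 : ∀ a, (N:ℝ)/(8 * 4^a) = (N/8) * (1/4:ℝ)^a := by
      intro a
      rw [div_pow, one_pow]
      field_simp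
    simp only [h1, ← Finset.mul_sum]
    rw [geom_sum_eq (by norm_num : (1/4:ℝ) ≠ 1) (L+1)]
    ring
  have hNlt : (N:ℝ) < 4^(L+1) := by
    have := Nat.lt_pow_succ_log_self (by norm_num : 1 < 4) N
    exact_mod_cast this
  have hgeom_ub : ∑ a ∈ Finset.range (L+1), (N:ℝ)/(8 * 4^a) ≤ N/6 := by
    rw [hgeom]
    have : (0:ℝ) ≤ (1/4:ℝ)^(L+1) := by positivity
    nlinarith
  have hgeom_lb : (N:ℝ)/6 - 1/6 ≤ ∑ a ∈ Finset.range (L+1), (N:ℝ)/(8 * 4^a) := by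
    rw [hgeom]
    have h4 : (0:ℝ) < 4^(L+1) := by positivity
    have : (1/4:ℝ)^(L+1) = 1/4^(L+1) := by rw [div_pow, one_pow]
    rw [this]
    have hx : (N:ℝ) * (1/4^(L+1)) ≤ 1 := by
      rw [mul_one_div, div_le_one h4]; linarith
    nlinarith
  -- termwise bounds
  have hub : (∑ a ∈ Finset.range (L+1), ((N / 4 ^ a + 1) / 8 : ℕ) : ℝ)
      ≤ ∑ a ∈ Finset.range (L+1), ((N:ℝ)/(8 * 4^a) + 1/8) := by
    apply Finset.sum_le_sum
    intro a _
    have h1 : (((N / 4 ^ a + 1) / 8 : ℕ) : ℝ) ≤ ((N / 4 ^ a + 1 : ℕ) : ℝ)/8 := Nat.cast_div_le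
    have h2 : ((N / 4 ^ a : ℕ) : ℝ) ≤ (N:ℝ)/((4^a : ℕ) : ℝ) := Nat.cast_div_le
    push_cast at h1 h2 ⊢
    have key : (N:ℝ)/(8*4^a) = ((N:ℝ)/4^a)/8 := by ring
    linarith
  have hlb : ∑ a ∈ Finset.range (L+1), ((N:ℝ)/(8 * 4^a) - 9/8)
      ≤ (∑ a ∈ Finset.range (L+1), ((N / 4 ^ a + 1) / 8 : ℕ) : ℝ) := by
    apply Finset.sum_le_sum
    intro a _
    have h4pos : 0 < (4:ℕ)^a := Nat.pow_pos (by norm_num)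
    have h1 : ((N / 4 ^ a + 1 : ℕ) : ℝ)/8 - 1 ≤ (((N / 4 ^ a + 1) / 8 : ℕ) : ℝ) :=
      cast_div_lb _ 8 (by norm_num)
    have h2 : (N:ℝ)/(((4:ℕ)^a : ℕ) : ℝ) - 1 ≤ ((N / 4 ^ a : ℕ) : ℝ) := cast_div_lb N (4^a) h4pos
    push_cast at h1 h2 ⊢
    have key : (N:ℝ)/(8*4^a) = ((N:ℝ)/4^a)/8 := by ring
    linarith
  have hsum9 : ∑ a ∈ Finset.range (L+1), ((N:ℝ)/(8 * 4^a) - 9/8)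
      = (∑ a ∈ Finset.range (L+1), (N:ℝ)/(8 * 4^a)) - 9/8 * (L+1) := by
    rw [Finset.sum_sub_distrib, Finset.sum_const, Finset.card_range]
    push_cast; ring
  have hsum1 : ∑ a ∈ Finset.range (L+1), ((N:ℝ)/(8 * 4^a) + 1/8)
      = (∑ a ∈ Finset.range (L+1), (N:ℝ)/(8 * 4^a)) + 1/8 * (L+1) := by
    rw [Finset.sum_add_distrib, Finset.sum_const, Finset.card_range]
    push_cast; ring
  rw [abs_le]
  constructor
  · rw [hsum9] at hlb
    have : (0:ℝ) ≤ (L:ℝ) + 1 := by positivity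
    nlinarith
  · rw [hsum1] at hub
    have : (0:ℝ) ≤ (L:ℝ) + 1 := by positivity
    nlinarith

/-- The natural density of a set of positive integers: limit of #(S ∩ [1,N])/N. -/
def natDensity (S : Set ℕ) (δ : ℝ) : Prop :=
  Tendsto (fun N : ℕ => (Nat.card {n : ℕ // n ∈ S ∧ 1 ≤ n ∧ n ≤ N} : ℝ) / N)
    atTop (nhds δ)

theorem stmt4 :
    natDensity {n : ℕ | ∃ a b : ℕ, n = 4 ^ a * (8 * b + 7)} (1 / 6) := by
  unfold natDensity
  simp only [Set.mem_setOf_eq]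
  have hsqrt : Tendsto (fun N : ℕ => Real.sqrt N / N) atTop (nhds 0) := by
    have he : (fun N : ℕ => Real.sqrt N / N) = fun N : ℕ => (Real.sqrt N)⁻¹ := by
      funext N
      rw [Real.sqrt_div_self', one_div]
    rw [he]
    apply Filter.Tendsto.inv_tendsto_atTop
    have h : Tendsto (fun x : ℝ => Real.sqrt x) atTop atTop := by
      simp only [Real.sqrt_eq_rpow]
      exact tendsto_rpow_atTop (by norm_num)
    exact h.comp tendsto_natCast_atTop_atTop
  have hg : Tendsto (fun N : ℕ => 1/6 - 2 * (Real.sqrt N / N)) atTop (nhds (1/6)) := by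
    have := (tendsto_const_nhds (x := (1/6:ℝ)) (f := atTop (α := ℕ))).sub (hsqrt.const_mul 2)
    simpa using this
  have hh : Tendsto (fun N : ℕ => 1/6 + 2 * (Real.sqrt N / N)) atTop (nhds (1/6)) := by
    have := (tendsto_const_nhds (x := (1/6:ℝ)) (f := atTop (α := ℕ))).add (hsqrt.const_mul 2)
    simpa using this
  have hbound : ∀ᶠ N : ℕ in atTop,
      |(Nat.card {n : ℕ // (∃ a b : ℕ, n = 4 ^ a * (8 * b + 7)) ∧ 1 ≤ n ∧ n ≤ N} : ℝ) / N - 1/6|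
        ≤ 2 * (Real.sqrt N / N) := by
    filter_upwards [eventually_ge_atTop 1] with N hN
    have hN' : (0:ℝ) < N := by exact_mod_cast hN
    set c : ℕ := Nat.card {n : ℕ // (∃ a b : ℕ, n = 4 ^ a * (8 * b + 7)) ∧ 1 ≤ n ∧ n ≤ N} with hc
    have hceq : c = ∑ a ∈ Finset.range (Nat.log 4 N + 1), (N / 4 ^ a + 1) / 8 := count_eq N
    have hb : |(c:ℝ) - N/6| ≤ 2 * (Nat.log 4 N + 1) := by
      rw [hceq]
      have := count_bounds N hN
      rw [Nat.cast_sum]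
      exact this
    have hL : ((Nat.log 4 N : ℝ) + 1) ≤ Real.sqrt N := by
      rw [show ((Nat.log 4 N : ℝ) + 1) = ((Nat.log 4 N + 1 : ℕ) : ℝ) by push_cast; ring]
      rw [Real.le_sqrt (by positivity) (by positivity)]
      have h1 : (Nat.log 4 N + 1)^2 ≤ N :=
        le_trans (sq_le_pow4 _) (Nat.pow_log_le_self 4 (by omega))
      exact_mod_cast h1
    have key : (c:ℝ)/N - 1/6 = ((c:ℝ) - N/6)/N := by field_simp
    rw [key, abs_div, abs_of_pos hN', div_le_iff₀ hN']
    calc |(c:ℝ) - N/6| ≤ 2 * (Nat.log 4 N + 1) := hb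
      _ ≤ 2 * Real.sqrt N := by linarith
      _ = 2 * (Real.sqrt N / N) * N := by field_simp
  apply tendsto_of_tendsto_of_tendsto_of_le_of_le' hg hh
  · filter_upwards [hbound] with N h
    rw [abs_le] at h
    linarith [h.1]
  · filter_upwards [hbound] with N h
    rw [abs_le] at h
    linarith [h.2]
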